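/- Let N ~ N(m, σ²) with |m| ≤ L, α ∈ [0,1], Y a real random variable with Lebesgue density h, ε Bernoulli(α), all independent. Fix 0 < ε₀ < 1 and set β = L + σ^{1-ε₀}, B = [-β, β]. Define the Markov kernel K by K(x, ·) = δ_x if x ∈ B and K(x, ·) = N(0, σ²) if x ∉ B. Then, with Q the law of N + εY, ‖KQ - law(N)‖_TV ≤ 8Φ(-σ^{-ε₀}) + α|m|/(√2 σ) + 2α ∫_{-2β}^{2β} h(y) dy. -/

import Mathlib

open MeasureTheory ProbabilityTheory

/-- Total variation distance `‖P - Q‖_TV = sup_A |P(A) - Q(A)|`. -/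
noncomputable def tvDist {α : Type*} [MeasurableSpace α] (P Q : Measure α) : ℝ :=
  ⨆ A : {A : Set α // MeasurableSet A}, |(P A.1).toReal - (Q A.1).toReal|

/-- Standard normal cumulative distribution function. -/
noncomputable def stdNormalCDF (t : ℝ) : ℝ :=
  ∫ u in Set.Iic t, (Real.sqrt (2 * Real.pi))⁻¹ * Real.exp (-u ^ 2 / 2)


instance gaussVarInst (μ σ : ℝ) : IsProbabilityMeasure (gaussianReal μ ⟨σ ^ 2, sq_nonneg σ⟩) :=
  instIsProbabilityMeasureGaussianReal μ _

section Aux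

variable {m σ : ℝ}

lemma gauss01_Iic (t : ℝ) : (gaussianReal 0 1 (Set.Iic t)).toReal = stdNormalCDF t := by
  rw [gaussianReal_apply_eq_integral _ one_ne_zero,
    ENNReal.toReal_ofReal (setIntegral_nonneg measurableSet_Iic
      fun x _ => gaussianPDFReal_nonneg _ _ _)]
  unfold stdNormalCDF gaussianPDFReal
  norm_num

variable {m σ : ℝ}

lemma gauss_eq_map (hσ : 0 < σ) :
    gaussianReal m ⟨σ ^ 2, sq_nonneg σ⟩
      = Measure.map (fun x => σ * x + m) (gaussianReal 0 1) := by
  have h1 : Measure.map (σ * ·) (gaussianReal 0 1) = gaussianReal 0 ⟨σ ^ 2, sq_nonneg σ⟩ := by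
    rw [gaussianReal_map_const_mul]
    norm_num
    rfl
  have : (fun x => σ * x + m) = (· + m) ∘ (σ * ·) := rfl
  rw [this, ← Measure.map_map (measurable_add_const m) (measurable_const_mul σ), h1,
    gaussianReal_map_add_const (μ := 0) (v := ⟨σ ^ 2, sq_nonneg σ⟩) m]
  norm_num

lemma gauss_Iic (hσ : 0 < σ) (t : ℝ) :
    ((gaussianReal m ⟨σ ^ 2, sq_nonneg σ⟩) (Set.Iic t)).toReal
      = stdNormalCDF ((t - m) / σ) := by
  rw [gauss_eq_map hσ, Measure.map_apply (by fun_prop) measurableSet_Iic]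
  have : (fun x => σ * x + m) ⁻¹' Set.Iic t = Set.Iic ((t - m) / σ) := by
    ext x
    simp only [Set.mem_preimage, Set.mem_Iic]
    rw [le_div_iff₀ hσ]
    constructor <;> intro <;> nlinarith
  rw [this, gauss01_Iic]

lemma gauss01_Ici (t : ℝ) : (gaussianReal 0 1 (Set.Ici t)).toReal = stdNormalCDF (-t) := by
  have h1 : Measure.map ((-1 : ℝ) * ·) (gaussianReal 0 1) = gaussianReal 0 1 := by
    rw [gaussianReal_map_const_mul]; norm_num
  have h2 : gaussianReal 0 1 (Set.Ici t)
      = Measure.map ((-1 : ℝ) * ·) (gaussianReal 0 1) (Set.Ici t) := by rw [h1]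
  rw [h2, Measure.map_apply (by fun_prop) measurableSet_Ici]
  have : ((-1 : ℝ) * ·) ⁻¹' Set.Ici t = Set.Iic (-t) := by
    ext x; simp only [Set.mem_preimage, Set.mem_Ici, Set.mem_Iic]; constructor <;> intro <;> linarith
  rw [this, gauss01_Iic]

lemma gauss_Ici (hσ : 0 < σ) (t : ℝ) :
    ((gaussianReal m ⟨σ ^ 2, sq_nonneg σ⟩) (Set.Ici t)).toReal
      = stdNormalCDF ((m - t) / σ) := by
  rw [gauss_eq_map (m := m) hσ, Measure.map_apply (by fun_prop) measurableSet_Ici]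
  have : (fun x => σ * x + m) ⁻¹' Set.Ici t = Set.Ici ((t - m) / σ) := by
    ext x
    simp only [Set.mem_preimage, Set.mem_Ici]
    rw [div_le_iff₀ hσ]
    constructor <;> intro <;> nlinarith
  rw [this, gauss01_Ici]
  ring_nf

lemma stdPDF_integrable : Integrable (fun u : ℝ => (Real.sqrt (2 * Real.pi))⁻¹ * Real.exp (-u ^ 2 / 2)) := by
  have := integrable_gaussianPDFReal 0 1
  unfold gaussianPDFReal at this
  convert this using 2 with x
  norm_num

lemma stdNormalCDF_nonneg (t : ℝ) : 0 ≤ stdNormalCDF t := by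
  rw [← gauss01_Iic]; exact ENNReal.toReal_nonneg

lemma stdNormalCDF_mono {t u : ℝ} (h : t ≤ u) : stdNormalCDF t ≤ stdNormalCDF u := by
  rw [← gauss01_Iic, ← gauss01_Iic]
  exact ENNReal.toReal_mono (measure_ne_top _ _) (measure_mono (Set.Iic_subset_Iic.2 h))

lemma stdNormalCDF_diff_le {t u : ℝ} (h : t ≤ u) :
    stdNormalCDF u - stdNormalCDF t ≤ (u - t) * (Real.sqrt (2 * Real.pi))⁻¹ := by
  unfold stdNormalCDF
  rw [intervalIntegral.integral_Iic_sub_Iic stdPDF_integrable.integrableOn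
    stdPDF_integrable.integrableOn, intervalIntegral.integral_of_le h]
  calc ∫ x in Set.Ioc t u, (Real.sqrt (2 * Real.pi))⁻¹ * Real.exp (-x ^ 2 / 2)
      ≤ ∫ _x in Set.Ioc t u, (Real.sqrt (2 * Real.pi))⁻¹ := by
        refine setIntegral_mono_on stdPDF_integrable.integrableOn
          (integrableOn_const (by simp) enorm_ne_top) measurableSet_Ioc fun x _ => ?_
        have h1 : Real.exp (-x ^ 2 / 2) ≤ 1 := by
          rw [Real.exp_le_one_iff]; nlinarith [sq_nonneg x]
        nlinarith [Real.sqrt_nonneg (2 * Real.pi), h1, inv_nonneg.2 (Real.sqrt_nonneg (2 * Real.pi))]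
    _ = (u - t) * (Real.sqrt (2 * Real.pi))⁻¹ := by
        simp [Real.volume_Ioc, ENNReal.toReal_ofReal (by linarith : (0:ℝ) ≤ u - t), h]

lemma half_lemma {f g : ℝ → ℝ} (hfi : Integrable f) (hgi : Integrable g)
    (hfm : Measurable f) (hgm : Measurable g) {A : Set ℝ} (hA : MeasurableSet A) :
    ∫ x in A, (f x - g x) ≤ ∫ x in {x | g x ≤ f x}, (f x - g x) := by
  set s : Set ℝ := {x | g x ≤ f x} with hs_def
  have hs : MeasurableSet s := measurableSet_le hgm hfm
  have hfgi : Integrable (fun x => f x - g x) := hfi.sub hgi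
  have h1 := integral_inter_add_diff (s := A) (t := s) (f := fun x => f x - g x)
    (μ := volume) hs hfgi.integrableOn
  have h2 : ∫ x in A \ s, (f x - g x) ≤ 0 := by
    refine setIntegral_nonpos (hA.diff hs) fun x hx => ?_
    have : ¬ g x ≤ f x := hx.2
    linarith [lt_of_not_ge this]
  have h3 : ∫ x in A ∩ s, (f x - g x) ≤ ∫ x in s, (f x - g x) := by
    refine setIntegral_mono_set hfgi.integrableOn ?_ (ae_of_all _ fun x hx => hx.2)
    filter_upwards [ae_restrict_mem hs] with x hx
    exact sub_nonneg.2 hx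
  linarith

lemma var_ne_zero (hσ : 0 < σ) : (⟨σ ^ 2, sq_nonneg σ⟩ : NNReal) ≠ 0 := by
  intro hc
  have := congrArg NNReal.toReal hc
  replace this : σ ^ 2 = 0 := this
  nlinarith

lemma gauss_toReal (hσ : 0 < σ) {A : Set ℝ} (hA : MeasurableSet A) :
    ((gaussianReal m ⟨σ ^ 2, sq_nonneg σ⟩) A).toReal
      = ∫ x in A, gaussianPDFReal m ⟨σ ^ 2, sq_nonneg σ⟩ x := by
  rw [gaussianReal_apply_eq_integral _ (var_ne_zero hσ) A]
  exact ENNReal.toReal_ofReal (setIntegral_nonneg hA fun x _ => gaussianPDFReal_nonneg _ _ _)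

lemma sqrtpi_inv_le : (Real.sqrt (2 * Real.pi))⁻¹ ≤ (Real.sqrt 2)⁻¹ := by
  have h2 : (0:ℝ) < Real.sqrt 2 := by positivity
  refine inv_anti₀ h2 (Real.sqrt_le_sqrt ?_)
  nlinarith [Real.pi_gt_three]

lemma gauss_shift_le (hσ : 0 < σ) {A : Set ℝ} (hA : MeasurableSet A) :
    ((gaussianReal m ⟨σ ^ 2, sq_nonneg σ⟩) A).toReal
      - ((gaussianReal 0 ⟨σ ^ 2, sq_nonneg σ⟩) A).toReal ≤ |m| / (Real.sqrt 2 * σ) := by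
  set v : NNReal := ⟨σ ^ 2, sq_nonneg σ⟩ with hv_def
  have hvc : (v : ℝ) = σ ^ 2 := rfl
  have hrhs0 : 0 ≤ |m| / (Real.sqrt 2 * σ) := by positivity
  rcases eq_or_ne m 0 with hm0 | hm0
  · simp [hm0, hrhs0]
  set f := gaussianPDFReal m v with hf_def
  set g := gaussianPDFReal 0 v with hg_def
  have hsub : ((gaussianReal m v) A).toReal - ((gaussianReal 0 v) A).toReal
      = ∫ x in A, (f x - g x) := by
    rw [gauss_toReal hσ hA, gauss_toReal hσ hA,
      integral_sub (integrable_gaussianPDFReal m v).integrableOn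
        (integrable_gaussianPDFReal 0 v).integrableOn]
  have hhalf := half_lemma (integrable_gaussianPDFReal m v) (integrable_gaussianPDFReal 0 v)
    (measurable_gaussianPDFReal m v) (measurable_gaussianPDFReal 0 v) hA
  have h2v : (0:ℝ) < 2 * (v:ℝ) := by rw [hvc]; positivity
  have hsetchar : ∀ x : ℝ, g x ≤ f x ↔ m * (2 * x - m) ≥ 0 := by
    intro x
    rw [hf_def, hg_def]
    unfold gaussianPDFReal
    have hc : (0:ℝ) < (Real.sqrt (2 * Real.pi * v))⁻¹ := by
      have : (0:ℝ) < 2 * Real.pi * v := by rw [hvc]; positivity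
      positivity
    rw [mul_le_mul_iff_right₀ hc, Real.exp_le_exp, div_le_div_iff_of_pos_right h2v]
    constructor <;> intro <;> nlinarith
  -- the set where f ≥ g
  have key : ∀ s : Set ℝ, MeasurableSet s → {x | g x ≤ f x} = s →
      ((gaussianReal m v) s).toReal - ((gaussianReal 0 v) s).toReal ≤ |m| / (Real.sqrt 2 * σ) →
      ((gaussianReal m v) A).toReal - ((gaussianReal 0 v) A).toReal ≤ |m| / (Real.sqrt 2 * σ) := by
    intro s hs hset hbound
    rw [hsub]
    refine le_trans (le_trans hhalf ?_) hbound
    rw [hset]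
    rw [gauss_toReal hσ hs, gauss_toReal hσ hs,
      integral_sub (integrable_gaussianPDFReal m v).integrableOn
        (integrable_gaussianPDFReal 0 v).integrableOn]
  have phi_abs_bound : ∀ t u : ℝ, t ≤ u → u - t ≤ |m| / σ →
      stdNormalCDF u - stdNormalCDF t ≤ |m| / (Real.sqrt 2 * σ) := by
    intro t u htu hd
    refine (stdNormalCDF_diff_le htu).trans ?_
    have h0 : (0:ℝ) ≤ |m| / σ := by positivity
    have h1 : (u - t) * (Real.sqrt (2 * Real.pi))⁻¹ ≤ (|m| / σ) * (Real.sqrt 2)⁻¹ :=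
      mul_le_mul hd sqrtpi_inv_le (by positivity) h0
    refine h1.trans_eq ?_
    rw [div_mul_eq_mul_div]
    have hσ' : σ ≠ 0 := ne_of_gt hσ
    have h2' : Real.sqrt 2 ≠ 0 := by positivity
    field_simp
  rcases lt_or_gt_of_ne hm0 with hmneg | hmpos
  · -- m < 0 : s = Iic (m/2)
    refine key (Set.Iic (m/2)) measurableSet_Iic ?_ ?_
    · ext x
      simp only [Set.mem_setOf_eq, Set.mem_Iic, hsetchar x]
      constructor <;> intro <;> nlinarith
    · rw [gauss_Iic hσ, gauss_Iic hσ]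
      refine phi_abs_bound _ _ ((div_le_div_iff_of_pos_right hσ).2 (by linarith)) ?_
      have he : (m/2 - m)/σ - (m/2 - 0)/σ = -m/σ := by ring
      rw [he, abs_of_neg hmneg]
  · -- m > 0 : s = Ici (m/2)
    refine key (Set.Ici (m/2)) measurableSet_Ici ?_ ?_
    · ext x
      simp only [Set.mem_setOf_eq, Set.mem_Ici, hsetchar x]
      constructor <;> intro <;> nlinarith
    · rw [gauss_Ici hσ, gauss_Ici hσ]
      refine phi_abs_bound _ _ ((div_le_div_iff_of_pos_right hσ).2 (by linarith)) ?_
      have he : (m - m/2)/σ - (0 - m/2)/σ = m/σ := by ring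
      rw [he, abs_of_pos hmpos]

lemma gauss_shift_abs (hσ : 0 < σ) {A : Set ℝ} (hA : MeasurableSet A) :
    |((gaussianReal m ⟨σ ^ 2, sq_nonneg σ⟩) A).toReal
      - ((gaussianReal 0 ⟨σ ^ 2, sq_nonneg σ⟩) A).toReal| ≤ |m| / (Real.sqrt 2 * σ) := by
  have hcompl : ∀ μ' : ℝ, ((gaussianReal μ' ⟨σ ^ 2, sq_nonneg σ⟩) Aᶜ).toReal
      = 1 - ((gaussianReal μ' ⟨σ ^ 2, sq_nonneg σ⟩) A).toReal := by
    intro μ'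
    rw [measure_compl hA (measure_ne_top _ _), measure_univ,
      ENNReal.toReal_sub_of_le prob_le_one ENNReal.one_ne_top, ENNReal.toReal_one]
  have h1 := gauss_shift_le (m := m) hσ hA
  have h2 := gauss_shift_le (m := m) hσ hA.compl
  rw [hcompl, hcompl] at h2
  rw [abs_le]
  constructor <;> linarith

lemma gauss_tail {L ε₀ : ℝ} (hσ : 0 < σ) (hm : |m| ≤ L) :
    ((gaussianReal m ⟨σ ^ 2, sq_nonneg σ⟩)
        (Set.Icc (-(L + σ ^ (1 - ε₀))) (L + σ ^ (1 - ε₀)))ᶜ).toReal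
      ≤ 2 * stdNormalCDF (-(σ ^ (-ε₀))) := by
  set β : ℝ := L + σ ^ (1 - ε₀) with hβ
  have hpow : σ ^ (1 - ε₀) / σ = σ ^ (-ε₀) := by
    have hpε : (0:ℝ) < σ ^ ε₀ := Real.rpow_pos_of_pos hσ _
    rw [Real.rpow_sub hσ, Real.rpow_one, Real.rpow_neg hσ.le]
    field_simp
  have hsub : (Set.Icc (-β) β)ᶜ ⊆ Set.Iic (-β) ∪ Set.Ici β := by
    intro x hx
    simp only [Set.mem_compl_iff, Set.mem_Icc, not_and_or, not_le] at hx
    rcases hx with hx | hx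
    · exact Or.inl (le_of_lt hx)
    · exact Or.inr (le_of_lt hx)
  have h1 : (gaussianReal m ⟨σ ^ 2, sq_nonneg σ⟩) (Set.Icc (-β) β)ᶜ
      ≤ (gaussianReal m ⟨σ ^ 2, sq_nonneg σ⟩) (Set.Iic (-β))
        + (gaussianReal m ⟨σ ^ 2, sq_nonneg σ⟩) (Set.Ici β) :=
    (measure_mono hsub).trans (measure_union_le _ _)
  have h2 := ENNReal.toReal_mono
    (by finiteness) h1
  rw [ENNReal.toReal_add (measure_ne_top _ _) (measure_ne_top _ _), gauss_Iic hσ, gauss_Ici hσ]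
    at h2
  refine h2.trans ?_
  have hmL : -L ≤ m ∧ m ≤ L := abs_le.mp hm
  have hb1 : (-β - m) / σ ≤ -(σ ^ (-ε₀)) := by
    rw [← hpow, ← neg_div]
    exact (div_le_div_iff_of_pos_right hσ).2 (by simp only [hβ]; linarith [hmL.1])
  have hb2 : (m - β) / σ ≤ -(σ ^ (-ε₀)) := by
    rw [← hpow, ← neg_div]
    exact (div_le_div_iff_of_pos_right hσ).2 (by simp only [hβ]; linarith [hmL.2])
  have := stdNormalCDF_mono hb1
  have := stdNormalCDF_mono hb2
  linarith

lemma conv_bound (μY : Measure ℝ) [SFinite μY] [IsProbabilityMeasure μY]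
    {S : Set ℝ} (hS : MeasurableSet S) {β : ℝ} (hSB : S ⊆ Set.Icc (-β) β) :
    ((gaussianReal m ⟨σ ^ 2, sq_nonneg σ⟩).conv μY) S
      ≤ μY (Set.Icc (-(2*β)) (2*β))
        + (gaussianReal m ⟨σ ^ 2, sq_nonneg σ⟩) (Set.Icc (-β) β)ᶜ := by
  set P := gaussianReal m ⟨σ ^ 2, sq_nonneg σ⟩ with hP
  have hconv : P.conv μY = Measure.map (fun x : ℝ × ℝ => x.1 + x.2) (P.prod μY) := rfl
  rw [hconv, Measure.map_apply measurable_add hS]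
  have hsub : (fun x : ℝ × ℝ => x.1 + x.2) ⁻¹' S
      ⊆ (Set.univ ×ˢ Set.Icc (-(2*β)) (2*β)) ∪ ((Set.Icc (-β) β)ᶜ ×ˢ Set.univ) := by
    rintro ⟨x, y⟩ hxy
    have hmem := hSB hxy
    simp only [Set.mem_Icc] at hmem
    by_cases hy : y ∈ Set.Icc (-(2*β)) (2*β)
    · exact Or.inl ⟨Set.mem_univ _, hy⟩
    · refine Or.inr ⟨?_, Set.mem_univ _⟩
      simp only [Set.mem_Icc, not_and_or, not_le] at hy
      simp only [Set.mem_compl_iff, Set.mem_Icc, not_and_or, not_le]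
      rcases hy with hy | hy
      · exact Or.inr (by linarith [hmem.1])
      · exact Or.inl (by linarith [hmem.2])
  refine (measure_mono hsub).trans ?_
  refine (measure_union_le _ _).trans ?_
  simp [Measure.prod_prod, measure_univ]

lemma conv_isProb (μY : Measure ℝ) [SFinite μY] [IsProbabilityMeasure μY] :
    IsProbabilityMeasure ((gaussianReal m ⟨σ ^ 2, sq_nonneg σ⟩).conv μY) := by
  infer_instance

lemma density_Icc (h : ℝ → ℝ) (hmeas : Measurable h) (h0 : ∀ y, 0 ≤ h y)
    [IsProbabilityMeasure (volume.withDensity fun y => ENNReal.ofReal (h y))]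
    {β : ℝ} (hβ : 0 ≤ β) :
    ((volume.withDensity fun y => ENNReal.ofReal (h y))
        (Set.Icc (-(2*β)) (2*β))).toReal = ∫ y in (-(2*β))..(2*β), h y := by
  have hle : -(2*β) ≤ 2*β := by linarith
  have happ : (volume.withDensity fun y => ENNReal.ofReal (h y)) (Set.Icc (-(2*β)) (2*β))
      = ∫⁻ y in Set.Icc (-(2*β)) (2*β), ENNReal.ofReal (h y) :=
    withDensity_apply _ measurableSet_Icc
  have hfin : (∫⁻ y in Set.Icc (-(2*β)) (2*β), ENNReal.ofReal (h y)) ≠ ⊤ := by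
    rw [← happ]; exact measure_ne_top _ _
  have hint : IntegrableOn h (Set.Icc (-(2*β)) (2*β)) volume := by
    refine ⟨hmeas.aestronglyMeasurable.restrict, ?_⟩
    rw [hasFiniteIntegral_iff_ofReal (ae_of_all _ h0)]
    exact lt_top_iff_ne_top.2 hfin
  rw [happ, ← ofReal_integral_eq_lintegral_ofReal hint (ae_of_all _ h0),
    ENNReal.toReal_ofReal (setIntegral_nonneg measurableSet_Icc fun x _ => h0 x),
    intervalIntegral.integral_of_le hle, integral_Icc_eq_integral_Ioc]

end Aux

set_option maxHeartbeats 1000000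

/-- Let `N ~ N(m, σ²)` with `|m| ≤ L`, `α ∈ [0,1]`, `Y` with Lebesgue density `h`, `ε`
Bernoulli(`α`), all independent, so that the law of `N + εY` is
`Q = (1-α)•N(m,σ²) + α•(N(m,σ²) ∗ Y)`.  Fix `0 < ε₀ < 1`, `β = L + σ^{1-ε₀}`,
`B = [-β, β]` and the kernel `K(x,·) = δ_x` on `B`, `K(x,·) = N(0,σ²)` off `B`, so that
`KQ = Q|_B + Q(Bᶜ)•N(0,σ²)`.  Then
`‖KQ - N(m,σ²)‖_TV ≤ 8Φ(-σ^{-ε₀}) + α|m|/(√2 σ) + 2α ∫_{-2β}^{2β} h(y) dy`. -/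
theorem tvDist_truncation_kernel (m σ L a ε₀ : ℝ) (hσ : 0 < σ) (hm : |m| ≤ L)
    (ha : a ∈ Set.Icc (0 : ℝ) 1) (hε₀ : 0 < ε₀) (hε₀1 : ε₀ < 1)
    (h : ℝ → ℝ) (hmeas : Measurable h) (h0 : ∀ y, 0 ≤ h y)
    [IsProbabilityMeasure (volume.withDensity fun y => ENNReal.ofReal (h y))] :
    let β : ℝ := L + σ ^ (1 - ε₀)
    let B : Set ℝ := Set.Icc (-β) β
    let Q : Measure ℝ :=
      ENNReal.ofReal (1 - a) • gaussianReal m ⟨σ ^ 2, sq_nonneg σ⟩ +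
        ENNReal.ofReal a •
          ((gaussianReal m ⟨σ ^ 2, sq_nonneg σ⟩).conv
            (volume.withDensity fun y => ENNReal.ofReal (h y)))
    tvDist (Q.restrict B + Q Bᶜ • gaussianReal 0 ⟨σ ^ 2, sq_nonneg σ⟩)
        (gaussianReal m ⟨σ ^ 2, sq_nonneg σ⟩) ≤
      8 * stdNormalCDF (-(σ ^ (-ε₀))) + a * |m| / (Real.sqrt 2 * σ) +
        2 * a * ∫ y in (-(2 * β))..(2 * β), h y := by
  intro β B Q
  obtain ⟨ha0, ha1⟩ := ha
  set P : Measure ℝ := gaussianReal m ⟨σ ^ 2, sq_nonneg σ⟩ with hP_def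
  set G : Measure ℝ := gaussianReal 0 ⟨σ ^ 2, sq_nonneg σ⟩ with hG_def
  set μY : Measure ℝ := volume.withDensity fun y => ENNReal.ofReal (h y) with hμY_def
  set C : Measure ℝ := P.conv μY with hC_def
  haveI hCprob : IsProbabilityMeasure C := by
    rw [hC_def, hP_def]; infer_instance
  have hB : MeasurableSet B := measurableSet_Icc
  have hβ0 : 0 ≤ β := by
    have h1 : (0:ℝ) < σ ^ (1 - ε₀) := Real.rpow_pos_of_pos hσ _
    have h2 : 0 ≤ L := (abs_nonneg m).trans hm
    simp only [β]; linarith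
  set φ : ℝ := stdNormalCDF (-(σ ^ (-ε₀))) with hφ_def
  have hφ0 : 0 ≤ φ := stdNormalCDF_nonneg _
  set η : ℝ := ∫ y in (-(2 * β))..(2 * β), h y with hη_def
  have hμYIcc : (μY (Set.Icc (-(2*β)) (2*β))).toReal = η := density_Icc h hmeas h0 hβ0
  have hη0 : 0 ≤ η := hμYIcc ▸ ENNReal.toReal_nonneg
  set T : ℝ := |m| / (Real.sqrt 2 * σ) with hT_def
  have hT0 : 0 ≤ T := by positivity
  have hpBc : (P Bᶜ).toReal ≤ 2 * φ := gauss_tail hσ hm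
  -- convolution bound
  have cub : ∀ S : Set ℝ, MeasurableSet S → S ⊆ B → (C S).toReal ≤ η + 2 * φ := by
    intro S hS hSB
    have h1 : C S ≤ μY (Set.Icc (-(2*β)) (2*β)) + P Bᶜ := conv_bound μY hS hSB
    have h2 := ENNReal.toReal_mono
      (ENNReal.add_ne_top.2 ⟨measure_ne_top _ _, measure_ne_top _ _⟩) h1
    rw [ENNReal.toReal_add (measure_ne_top _ _) (measure_ne_top _ _), hμYIcc] at h2
    linarith
  have hQapp : ∀ S : Set ℝ, (Q S).toReal = (1 - a) * (P S).toReal + a * (C S).toReal := by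
    intro S
    simp only [Q, Measure.add_apply, Measure.smul_apply, smul_eq_mul]
    rw [ENNReal.toReal_add (ENNReal.mul_ne_top ENNReal.ofReal_ne_top (measure_ne_top _ _))
        (ENNReal.mul_ne_top ENNReal.ofReal_ne_top (measure_ne_top _ _)),
      ENNReal.toReal_mul, ENNReal.toReal_mul, ENNReal.toReal_ofReal (by linarith),
      ENNReal.toReal_ofReal ha0]
  have hQfin : ∀ S : Set ℝ, Q S ≠ ⊤ := by
    intro S
    simp only [Q, Measure.add_apply, Measure.smul_apply, smul_eq_mul]
    exact ENNReal.add_ne_top.2 ⟨ENNReal.mul_ne_top ENNReal.ofReal_ne_top (measure_ne_top _ _),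
      ENNReal.mul_ne_top ENNReal.ofReal_ne_top (measure_ne_top _ _)⟩
  have hRHS0 : 0 ≤ 8 * φ + a * |m| / (Real.sqrt 2 * σ) + 2 * a * η := by
    have : 0 ≤ a * |m| / (Real.sqrt 2 * σ) := by positivity
    nlinarith [mul_nonneg ha0 hη0]
  unfold tvDist
  refine Real.iSup_le (fun As => ?_) hRHS0
  obtain ⟨A, hA⟩ := As
  -- abbreviations
  set pA : ℝ := (P A).toReal with hpA_def
  set gA : ℝ := (G A).toReal with hgA_def
  set pAB : ℝ := (P (A ∩ B)).toReal with hpAB_def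
  set pABc : ℝ := (P (A ∩ Bᶜ)).toReal with hpABc_def
  set pBc : ℝ := (P Bᶜ).toReal with hpBc_def
  set cAB : ℝ := (C (A ∩ B)).toReal with hcAB_def
  set cB : ℝ := (C B).toReal with hcB_def
  set cBc : ℝ := (C Bᶜ).toReal with hcBc_def
  -- basic facts
  have hpA_split : pA = pAB + pABc := by
    rw [hpA_def, hpAB_def, hpABc_def, ← ENNReal.toReal_add (measure_ne_top _ _)
      (measure_ne_top _ _), ← Set.diff_eq, measure_inter_add_diff A hB]
  have hpABc_le : pABc ≤ pBc :=
    ENNReal.toReal_mono (measure_ne_top _ _) (measure_mono Set.inter_subset_right)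
  have hgA1 : gA ≤ 1 := by
    rw [hgA_def]
    have := prob_le_one (μ := G) (s := A)
    exact ENNReal.toReal_le_of_le_ofReal one_pos.le (by simpa using this)
  have hgA0 : 0 ≤ gA := ENNReal.toReal_nonneg
  have hpABc0 : 0 ≤ pABc := ENNReal.toReal_nonneg
  have hpAB0 : 0 ≤ pAB := ENNReal.toReal_nonneg
  have hpBc0 : 0 ≤ pBc := ENNReal.toReal_nonneg
  have hcAB0 : 0 ≤ cAB := ENNReal.toReal_nonneg
  have hcB0 : 0 ≤ cB := ENNReal.toReal_nonneg
  have hcBc0 : 0 ≤ cBc := ENNReal.toReal_nonneg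
  have hshift : |pA - gA| ≤ T := gauss_shift_abs hσ hA
  have hcAB_le : cAB ≤ η + 2 * φ := cub (A ∩ B) (hA.inter hB) Set.inter_subset_right
  have hcB_le : cB ≤ η + 2 * φ := cub B hB subset_rfl
  have hcsum : cB + cBc = 1 := by
    rw [hcB_def, hcBc_def, ← ENNReal.toReal_add (measure_ne_top _ _) (measure_ne_top _ _),
      measure_add_measure_compl hB, measure_univ, ENNReal.toReal_one]
  have hcBc1 : cBc ≤ 1 := by linarith
  -- compute the LHS
  have hKQ : (((Q.restrict B + Q Bᶜ • G)) A).toReal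
      = ((1 - a) * pAB + a * cAB) + ((1 - a) * pBc + a * cBc) * gA := by
    rw [Measure.add_apply, Measure.restrict_apply hA, Measure.smul_apply, smul_eq_mul,
      ENNReal.toReal_add (hQfin _) (ENNReal.mul_ne_top (hQfin _) (measure_ne_top _ _)),
      ENNReal.toReal_mul, hQapp, hQapp]
  rw [hKQ]
  -- estimates
  have habs := abs_le.1 hshift
  have h1 : pBc * gA ≤ 2 * φ := (mul_le_of_le_one_right hpBc0 hgA1).trans hpBc
  have h2 : cBc * gA ≤ gA := mul_le_of_le_one_left hgA0 hcBc1
  have h3 : gA - (η + 2 * φ) ≤ cBc * gA := by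
    have ha' : 1 - (η + 2 * φ) ≤ cBc := by linarith
    have hb' : (1 - (η + 2 * φ)) * gA ≤ cBc * gA := mul_le_mul_of_nonneg_right ha' hgA0
    linarith [hb', mul_nonneg (by linarith : (0:ℝ) ≤ η + 2 * φ) (by linarith : 0 ≤ 1 - gA)]
  have h4 : 0 ≤ pBc * gA := mul_nonneg hpBc0 hgA0
  have e1 : (1 - a) * (pAB + pBc * gA - pA) ≤ (1 - a) * (2 * φ) :=
    mul_le_mul_of_nonneg_left (by linarith) (by linarith)
  have e2 : a * (cAB + cBc * gA - pA) ≤ a * (2 * φ + T + η) :=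
    mul_le_mul_of_nonneg_left (by linarith) ha0
  have e3 : (1 - a) * (-(2 * φ)) ≤ (1 - a) * (pAB + pBc * gA - pA) :=
    mul_le_mul_of_nonneg_left (by linarith) (by linarith)
  have e4 : a * (-(2 * φ + T + η)) ≤ a * (cAB + cBc * gA - pA) :=
    mul_le_mul_of_nonneg_left (by linarith) ha0
  have hsplitE : ((1 - a) * pAB + a * cAB) + ((1 - a) * pBc + a * cBc) * gA - pA
      = (1 - a) * (pAB + pBc * gA - pA) + a * (cAB + cBc * gA - pA) := by ring
  have hTgoal : a * |m| / (Real.sqrt 2 * σ) = a * T := by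
    rw [hT_def, mul_div_assoc]
  rw [abs_le]
  constructor
  · linarith [hsplitE, e3, e4, hTgoal, hφ0, mul_nonneg ha0 hη0]
  · linarith [hsplitE, e1, e2, hTgoal, hφ0, mul_nonneg ha0 hη0]
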